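/- Let G be a bridgeless cubic graph, let ω(G) denote its oddness (the minimum number of odd circuits in a 2-factor of G), and let μ₂(G) be the minimum of |M₁ ∩ M₂| over all pairs of 1-factors M₁, M₂ of G. Then ω(G) ≤ 2·μ₂(G). -/

import Mathlib

open SimpleGraph

/-- The edge cut `∂_G(S)`: edges of `G` with exactly one end in `S`. -/
def edgeCut {V : Type*} (G : SimpleGraph V) (S : Set V) : Set (Sym2 V) :=
  {e | e ∈ G.edgeSet ∧ ∃ x ∈ S, ∃ y ∉ S, e = s(x, y)}

/-- `G` is cubic (3-regular). -/
def IsCubic {V : Type*} (G : SimpleGraph V) : Prop :=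
  ∀ v, (G.neighborSet v).ncard = 3

/-- `G` is bridgeless: no edge is a bridge. -/
def Bridgeless {V : Type*} (G : SimpleGraph V) : Prop :=
  ∀ e ∈ G.edgeSet, ¬ G.IsBridge e

/-- `μ₂(G)`: the minimum size of the intersection of two 1-factors of `G`. -/
noncomputable def mu2 {V : Type*} [Fintype V] (G : SimpleGraph V) : ℕ :=
  sInf {n | ∃ M₁ M₂ : G.Subgraph, M₁.IsPerfectMatching ∧ M₂.IsPerfectMatching ∧
    (M₁.edgeSet ∩ M₂.edgeSet).ncard = n}

/-- The oddness `ω(G)`: the minimum number of odd components (odd circuits)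
in a 2-factor of `G`. -/
noncomputable def oddness {V : Type*} [Fintype V] (G : SimpleGraph V) : ℕ :=
  sInf {n | ∃ H : G.Subgraph, H.IsSpanning ∧ (∀ v, (H.neighborSet v).ncard = 2) ∧
    Nat.card {C : H.coe.ConnectedComponent // Odd (Nat.card C.supp)} = n}

section aux
variable {V : Type*} [Fintype V] {G : SimpleGraph V}

/-- A perfect matching has an edge leaving any odd set. -/
lemma pm_crossing {M : G.Subgraph} (hM : M.IsPerfectMatching) {S : Set V}
    (hS : Odd S.ncard) : ∃ v ∈ S, ∃ w, w ∉ S ∧ M.Adj v w := by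
  by_contra! h
  have hMmatch : (M.induce S).IsMatching := by
    intro v hv
    simp only [Subgraph.induce_verts] at hv
    obtain ⟨w, hw, huniq⟩ := hM.1 (hM.2 v)
    have hwS : w ∈ S := by
      by_contra hws; exact h v hv w hws hw
    exact ⟨w, ⟨hv, hwS, hw⟩, fun y hy => huniq y hy.2.2⟩
  classical
  haveI : Fintype ↥(M.induce S).verts := Fintype.ofFinite _
  have heven := hMmatch.even_card
  rw [← Nat.not_even_iff_odd] at hS
  apply hS
  have hv : (M.induce S).verts = S := rfl
  have h2 : (M.induce S).verts.toFinset.card = S.ncard := by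
    rw [← Set.ncard_eq_toFinset_card']
    exact congrArg Set.ncard hv
  rwa [h2] at heven

/-- Support of a finite set of edges has at most twice the number of elements. -/
lemma support_card_le (I : Set (Sym2 V)) :
    {v : V | ∃ e ∈ I, v ∈ e}.ncard ≤ 2 * I.ncard := by
  classical
  refine Set.Finite.induction_on
    (motive := fun s _ => {v : V | ∃ e ∈ s, v ∈ e}.ncard ≤ 2 * s.ncard) I
    (Set.toFinite I) (by simp) ?_
  intro e s hes hs ih
  have hsub : {v : V | ∃ e' ∈ insert e s, v ∈ e'} ⊆
      {v : V | v ∈ e} ∪ {v : V | ∃ e' ∈ s, v ∈ e'} := by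
    rintro v ⟨e', he', hv⟩
    rcases he' with rfl | he'
    · exact Or.inl hv
    · exact Or.inr ⟨e', he', hv⟩
  calc {v : V | ∃ e' ∈ insert e s, v ∈ e'}.ncard
      ≤ ({v : V | v ∈ e} ∪ {v : V | ∃ e' ∈ s, v ∈ e'}).ncard :=
        Set.ncard_le_ncard hsub (Set.toFinite _)
    _ ≤ {v : V | v ∈ e}.ncard + {v : V | ∃ e' ∈ s, v ∈ e'}.ncard :=
        Set.ncard_union_le _ _
    _ ≤ 2 + 2 * s.ncard := by
        refine Nat.add_le_add ?_ ih
        obtain ⟨a, b⟩ := e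
        have : {v : V | v ∈ s(a, b)} ⊆ {a, b} := by
          intro v hv
          simpa using hv
        calc {v : V | v ∈ s(a,b)}.ncard ≤ ({a, b} : Set V).ncard :=
              Set.ncard_le_ncard this (Set.toFinite _)
          _ ≤ 2 := Set.ncard_insert_le _ _ |>.trans (by simp)
    _ = 2 * (insert e s).ncard := by
        rw [Set.ncard_insert_of_notMem hes hs]; ring

end aux

theorem stmt0 {V : Type*} [Fintype V] (G : SimpleGraph V)
    (hcubic : IsCubic G) (hbridgeless : Bridgeless G) :
    oddness G ≤ 2 * mu2 G := by
  classical
  by_cases hne : {n | ∃ M₁ M₂ : G.Subgraph, M₁.IsPerfectMatching ∧ M₂.IsPerfectMatching ∧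
      (M₁.edgeSet ∩ M₂.edgeSet).ncard = n}.Nonempty
  · -- get matchings achieving mu2
    obtain ⟨M₁, M₂, hM₁, hM₂, hk⟩ := Nat.sInf_mem hne
    -- H : complement 2-factor of M₁
    set H : G.Subgraph :=
      { verts := Set.univ
        Adj := fun v w => G.Adj v w ∧ ¬ M₁.Adj v w
        adj_sub := fun h => h.1
        edge_vert := fun _ => Set.mem_univ _
        symm := ⟨fun v w h => ⟨h.1.symm, fun ha => h.2 ha.symm⟩⟩ } with hH
    have hHspan : H.IsSpanning := fun v => Set.mem_univ v
    have hHreg : ∀ v, (H.neighborSet v).ncard = 2 := by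
      intro v
      obtain ⟨w₀, hw₀, huniq⟩ := hM₁.1 (hM₁.2 v)
      have hset : H.neighborSet v = G.neighborSet v \ {w₀} := by
        ext w
        simp only [Subgraph.mem_neighborSet, hH, Set.mem_diff, Set.mem_singleton_iff,
          mem_neighborSet]
        constructor
        · rintro ⟨h1, h2⟩
          exact ⟨h1, fun he => h2 (he ▸ hw₀)⟩
        · rintro ⟨h1, h2⟩
          exact ⟨h1, fun ha => h2 (huniq w ha)⟩
      have hmem : w₀ ∈ G.neighborSet v := M₁.adj_sub hw₀
      rw [hset, Set.ncard_diff_singleton_of_mem hmem, hcubic v]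
    -- main counting
    set I : Set (Sym2 V) := M₁.edgeSet ∩ M₂.edgeSet with hI
    set T : Set V := {v : V | ∃ e ∈ I, v ∈ e} with hT
    have hmain : ∀ C : H.coe.ConnectedComponent, Odd (Nat.card C.supp) →
        ∃ v, v ∈ Subtype.val '' C.supp ∧ v ∈ T := by
      intro C hodd
      set S : Set V := Subtype.val '' C.supp with hS
      have hScard : Odd S.ncard := by
        rwa [hS, Set.ncard_image_of_injective _ Subtype.val_injective,
          ← Nat.card_coe_set_eq]
      obtain ⟨v, hvS, w, hwS, hadj⟩ := pm_crossing hM₂ hScard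
      have hM₁adj : M₁.Adj v w := by
        by_contra hM₁adj
        have hHadj : H.Adj v w := ⟨M₂.adj_sub hadj, hM₁adj⟩
        exact hwS (ConnectedComponent.mem_coe_supp_of_adj hvS (hHspan w) hHadj)
      refine ⟨v, hvS, s(v, w), ⟨Subgraph.mem_edgeSet.mpr hM₁adj, Subgraph.mem_edgeSet.mpr hadj⟩, ?_⟩
      simp
    -- injection from odd components into T
    set OC := {C : H.coe.ConnectedComponent // Odd (Nat.card C.supp)} with hOC
    have hinj : ∃ f : OC → ↥T, Function.Injective f := by
      refine ⟨fun C => ⟨(hmain C.1 C.2).choose, (hmain C.1 C.2).choose_spec.2⟩, ?_⟩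
      intro C C' heq
      have heq' : (hmain C.1 C.2).choose = (hmain C'.1 C'.2).choose :=
        congrArg Subtype.val heq
      obtain ⟨a, ha, ha2⟩ := (hmain C.1 C.2).choose_spec.1
      obtain ⟨b, hb, hb2⟩ := (hmain C'.1 C'.2).choose_spec.1
      have hab : a = b := Subtype.ext (by rw [ha2, hb2, heq'])
      apply Subtype.ext
      rw [← (ConnectedComponent.mem_supp_iff _ _).mp ha,
        ← (ConnectedComponent.mem_supp_iff _ _).mp hb, hab]
    obtain ⟨f, hf⟩ := hinj
    have hcount : Nat.card OC ≤ 2 * mu2 G := by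
      calc Nat.card OC ≤ Nat.card ↥T := Nat.card_le_card_of_injective f hf
        _ = T.ncard := Nat.card_coe_set_eq T
        _ ≤ 2 * I.ncard := support_card_le I
        _ = 2 * mu2 G := by rw [hk]; rfl
    refine le_trans (Nat.sInf_le ?_) hcount
    exact ⟨H, hHspan, hHreg, rfl⟩
  · -- no perfect matching: no 2-factor either
    have hodd : {n | ∃ H : G.Subgraph, H.IsSpanning ∧ (∀ v, (H.neighborSet v).ncard = 2) ∧
        Nat.card {C : H.coe.ConnectedComponent // Odd (Nat.card C.supp)} = n} = ∅ := by
      rw [Set.eq_empty_iff_forall_notMem]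
      rintro n ⟨H, hspan, hreg, -⟩
      apply hne
      set M : G.Subgraph :=
        { verts := Set.univ
          Adj := fun v w => G.Adj v w ∧ ¬ H.Adj v w
          adj_sub := fun h => h.1
          edge_vert := fun _ => Set.mem_univ _
          symm := ⟨fun v w h => ⟨h.1.symm, fun ha => h.2 ha.symm⟩⟩ } with hM
      have hMpm : M.IsPerfectMatching := by
        constructor
        · intro v _
          have hsub : H.neighborSet v ⊆ G.neighborSet v := fun w hw => H.adj_sub hw
          have hset : M.neighborSet v = G.neighborSet v \ H.neighborSet v := rfl
          have hcard : (M.neighborSet v).ncard = 1 := by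
            rw [hset, Set.ncard_diff hsub, hcubic v, hreg v]
          obtain ⟨w, hw⟩ := Set.ncard_eq_one.mp hcard
          refine ⟨w, ?_, ?_⟩
          · have : w ∈ M.neighborSet v := by rw [hw]; exact rfl
            exact this
          · intro y hy
            have : y ∈ M.neighborSet v := hy
            rw [hw] at this
            exact this
        · intro v; exact Set.mem_univ v
      exact ⟨(M.edgeSet ∩ M.edgeSet).ncard, M, M, hMpm, hMpm, rfl⟩
    unfold oddness
    rw [hodd, Nat.sInf_empty]
    exact Nat.zero_le _
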